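/- arXiv:2602.09674 — 2 statements merged into one kernel-verified Lean document; each statement's English description precedes it below -/
import Mathlib

section
/- For any small category A, the full subcategory of abelian presheaves on A whose objects are finite direct sums of representable abelian presheaves (i.e. presheaves of the form a ↦ ⊕_{i∈I} ℤ^(Hom_A(a, a_i)) for a finite set I) is a dense subcategory of the category of abelian presheaves on A; that is, every abelian presheaf is the colimit of the canonical diagram of such objects mapping to it. -/
open CategoryTheory Limits Opposite

noncomputable section

/-- The abelianized Yoneda embedding, sending `a` to the representable abelian presheaf
`b ↦ ℤ^(Hom_A(b, a))`. -/
def abYoneda (A : Type) [SmallCategory A] : A ⥤ (Aᵒᵖ ⥤ AddCommGrpCat) :=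
  yoneda ⋙ (Functor.whiskeringRight _ _ _).obj AddCommGrpCat.free

/-- The property of being (isomorphic to) a finite direct sum of representable
abelian presheaves. -/
def IsFiniteSumOfRepresentables {A : Type} [SmallCategory A]
    (Z : Aᵒᵖ ⥤ AddCommGrpCat) : Prop :=
  ∃ (n : ℕ) (a : Fin n → A), Nonempty (Z ≅ ∐ fun i => (abYoneda A).obj (a i))

/-- The inclusion of the additive envelope `Add(A)` (finite direct sums of representable
abelian presheaves) into the category of abelian presheaves on `A`. -/
def addEnvelopeInclusion (A : Type) [SmallCategory A] :
    ObjectProperty.FullSubcategory (IsFiniteSumOfRepresentables (A := A)) ⥤ (Aᵒᵖ ⥤ AddCommGrpCat) :=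
  ObjectProperty.ι _

/-- The canonical cocone on the diagram `Add(A)/X → (Aᵒᵖ ⥤ Ab)` with apex `X`, whose legs
are the structure morphisms. -/
@[simps]
def canonicalCocone {A : Type} [SmallCategory A] (X : Aᵒᵖ ⥤ AddCommGrpCat) :
    Cocone (CostructuredArrow.proj (addEnvelopeInclusion A) X ⋙ addEnvelopeInclusion A) where
  pt := X
  ι :=
    { app := fun f => f.hom
      naturality := fun f g φ => (CostructuredArrow.w φ).trans (Category.comp_id _).symm }

namespace AddEnvelopeDenseAux

lemma freeHom_ext {α : Type} {β : Type} [AddCommGroup β] (f g : FreeAbelianGroup α →+ β)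
    (h : ∀ x, f (FreeAbelianGroup.of x) = g (FreeAbelianGroup.of x)) : f = g :=
  AddMonoidHom.ext fun t => by
    rw [FreeAbelianGroup.lift_ext f g h]

variable {A : Type} [SmallCategory A]

/-- The canonical generator of the representable abelian presheaf. -/
def gen (a : A) : ((abYoneda A).obj a).obj (op a) := FreeAbelianGroup.of (𝟙 a)

/-- The morphism of abelian presheaves `ℤ[a] ⟶ X` corresponding to `x : X(a)`. -/
def toHom (X : Aᵒᵖ ⥤ AddCommGrpCat) (a : A) (x : X.obj (op a)) : (abYoneda A).obj a ⟶ X where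
  app b := AddCommGrpCat.ofHom (FreeAbelianGroup.lift (fun f : b.unop ⟶ a => X.map f.op x))
  naturality b c g := by
    apply AddCommGrpCat.hom_ext
    refine freeHom_ext _ _ (fun f => ?_)
    show FreeAbelianGroup.lift _ (FreeAbelianGroup.map _ (FreeAbelianGroup.of f)) =
      X.map g (FreeAbelianGroup.lift _ (FreeAbelianGroup.of f))
    rw [FreeAbelianGroup.map_of_apply, FreeAbelianGroup.lift_apply_of, FreeAbelianGroup.lift_apply_of]
    rw [← CategoryTheory.comp_apply, ← X.map_comp]
    rfl

@[simp] lemma toHom_app_of (X : Aᵒᵖ ⥤ AddCommGrpCat) (a : A) (b : Aᵒᵖ) (x : X.obj (op a))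
    (f : b.unop ⟶ a) :
    (toHom X a x).app b (FreeAbelianGroup.of f) = X.map f.op x :=
  FreeAbelianGroup.lift_apply_of _ _

@[simp] lemma map_gen (a : A) (b : Aᵒᵖ) (f : b.unop ⟶ a) :
    ((abYoneda A).obj a).map f.op (gen a) = FreeAbelianGroup.of f := by
  show FreeAbelianGroup.map _ (FreeAbelianGroup.of _) = _
  rw [FreeAbelianGroup.map_of_apply]
  simp [gen]

@[simp] lemma abYoneda_map_gen (a b : A) (f : a ⟶ b) :
    ((abYoneda A).map f).app (op a) (gen a) = FreeAbelianGroup.of f := by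
  show FreeAbelianGroup.map _ (FreeAbelianGroup.of _) = _
  rw [FreeAbelianGroup.map_of_apply]
  simp [gen]

lemma toHom_eval {X : Aᵒᵖ ⥤ AddCommGrpCat} {a : A} (g : (abYoneda A).obj a ⟶ X) :
    toHom X a (g.app (op a) (gen a)) = g := by
  apply NatTrans.ext; funext b
  apply AddCommGrpCat.hom_ext
  refine freeHom_ext _ _ (fun f => ?_)
  erw [toHom_app_of, ← CategoryTheory.comp_apply, ← g.naturality f.op, CategoryTheory.comp_apply,
    map_gen]
  rfl

lemma hom_ext_free {X : Aᵒᵖ ⥤ AddCommGrpCat} {a : A} (g h : (abYoneda A).obj a ⟶ X)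
    (H : g.app (op a) (gen a) = h.app (op a) (gen a)) : g = h := by
  rw [← toHom_eval g, ← toHom_eval h, H]

lemma toHom_add {X : Aᵒᵖ ⥤ AddCommGrpCat} {a : A} (x y : X.obj (op a)) :
    toHom X a (x + y) = toHom X a x + toHom X a y := by
  apply hom_ext_free
  show (toHom X a (x + y)).app (op a) (gen a) =
    (toHom X a x).app (op a) (gen a) + (toHom X a y).app (op a) (gen a)
  erw [toHom_app_of, toHom_app_of, toHom_app_of]
  simp

/-- A single representable is an object of the additive envelope. -/
def singleIso (a : A) : (abYoneda A).obj a ≅ ∐ fun (_ : Fin 1) => (abYoneda A).obj a where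
  hom := Sigma.ι (fun _ : Fin 1 => (abYoneda A).obj a) 0
  inv := Sigma.desc fun _ => 𝟙 _
  hom_inv_id := by simp
  inv_hom_id := by
    apply Sigma.hom_ext
    intro i
    obtain rfl : i = 0 := Subsingleton.elim _ _
    simp

def single (a : A) : ObjectProperty.FullSubcategory (IsFiniteSumOfRepresentables (A := A)) :=
  ⟨(abYoneda A).obj a, 1, fun _ => a, ⟨singleIso a⟩⟩

def mkArrow {X : Aᵒᵖ ⥤ AddCommGrpCat} (a : A) (g : (abYoneda A).obj a ⟶ X) :
    CostructuredArrow (addEnvelopeInclusion A) X :=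
  CostructuredArrow.mk (Y := single a) g

variable {X : Aᵒᵖ ⥤ AddCommGrpCat}
  (s : Cocone (CostructuredArrow.proj (addEnvelopeInclusion A) X ⋙ addEnvelopeInclusion A))

/-- The underlying function of the descended map. -/
def Phi (a : A) (x : X.obj (op a)) : s.pt.obj (op a) :=
  (s.ι.app (mkArrow a (toHom X a x))).app (op a) (gen a)

lemma leg_w {j j' : CostructuredArrow (addEnvelopeInclusion A) X} (φ : j ⟶ j') :
    s.ι.app j = (show j.left.obj ⟶ j'.left.obj from φ.left.hom) ≫ s.ι.app j' := (s.w φ).symm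

lemma Phi_add (a : A) (x y : X.obj (op a)) : Phi s a (x + y) = Phi s a x + Phi s a y := by
  let D : Fin 2 → (Aᵒᵖ ⥤ AddCommGrpCat) := fun _ => (abYoneda A).obj a
  let Z₂ : ObjectProperty.FullSubcategory (IsFiniteSumOfRepresentables (A := A)) :=
    ⟨∐ D, 2, fun _ => a, ⟨Iso.refl _⟩⟩
  let g : (∐ D) ⟶ X := Sigma.desc ![toHom X a x, toHom X a y]
  let j₂ : CostructuredArrow (addEnvelopeInclusion A) X := CostructuredArrow.mk (Y := Z₂) g
  have w0 : (addEnvelopeInclusion A).map (X := single a) (Y := Z₂) (ObjectProperty.homMk (Sigma.ι D 0)) ≫ j₂.hom =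
      (mkArrow a (toHom X a x)).hom := by
    show Sigma.ι D 0 ≫ g = toHom X a x
    simp [g, D]
  have w1 : (addEnvelopeInclusion A).map (X := single a) (Y := Z₂) (ObjectProperty.homMk (Sigma.ι D 1)) ≫ j₂.hom =
      (mkArrow a (toHom X a y)).hom := by
    show Sigma.ι D 1 ≫ g = toHom X a y
    simp [g, D]
  have ws : (addEnvelopeInclusion A).map (X := single a) (Y := Z₂)
      (ObjectProperty.homMk (Sigma.ι D 0 + Sigma.ι D 1)) ≫ j₂.hom = (mkArrow a (toHom X a (x + y))).hom := by
    show (Sigma.ι D 0 + Sigma.ι D 1) ≫ g = toHom X a (x + y)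
    rw [Preadditive.add_comp, toHom_add]
    show Sigma.ι D 0 ≫ g + Sigma.ι D 1 ≫ g = _
    simp [g, D]
  have e0 := leg_w s ((CostructuredArrow.homMk (ObjectProperty.homMk (Sigma.ι D 0)) w0 : mkArrow a (toHom X a x) ⟶ j₂))
  have e1 := leg_w s ((CostructuredArrow.homMk (ObjectProperty.homMk (Sigma.ι D 1)) w1 : mkArrow a (toHom X a y) ⟶ j₂))
  have es := leg_w s ((CostructuredArrow.homMk (ObjectProperty.homMk (Sigma.ι D 0 + Sigma.ι D 1)) ws : mkArrow a (toHom X a (x + y)) ⟶ j₂))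
  simp only [CostructuredArrow.homMk_left, ObjectProperty.homMk_hom] at e0 e1 es
  unfold Phi
  rw [es, e0, e1]
  show (s.ι.app j₂).app (op a) ((Sigma.ι D 0 + Sigma.ι D 1).app (op a) (gen a))
    = (s.ι.app j₂).app (op a) ((Sigma.ι D 0).app (op a) (gen a))
      + (s.ι.app j₂).app (op a) ((Sigma.ι D 1).app (op a) (gen a))
  have hadd : (Sigma.ι D 0 + Sigma.ι D 1).app (op a) (gen a)
      = (Sigma.ι D 0).app (op a) (gen a) + (Sigma.ι D 1).app (op a) (gen a) := by
    rw [NatTrans.app_add]; rfl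
  erw [hadd, map_add]

/-- The descended morphism. -/
def descHom : X ⟶ s.pt where
  app b := AddCommGrpCat.ofHom (AddMonoidHom.mk' (fun x => Phi s b.unop x) (fun x y => Phi_add s b.unop x y))
  naturality b c f := by
    apply AddCommGrpCat.hom_ext
    apply AddMonoidHom.ext
    intro x
    show Phi s c.unop (X.map f x) = s.pt.map f (Phi s b.unop x)
    have w : (addEnvelopeInclusion A).map (X := single c.unop) (Y := single b.unop)
        (ObjectProperty.homMk ((abYoneda A).map f.unop)) ≫ (mkArrow b.unop (toHom X b.unop x)).hom
        = (mkArrow c.unop (toHom X c.unop (X.map f x))).hom := by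
      show (abYoneda A).map f.unop ≫ toHom X b.unop x = toHom X c.unop (X.map f x)
      apply hom_ext_free
      rw [NatTrans.comp_app, CategoryTheory.comp_apply, abYoneda_map_gen]
      erw [toHom_app_of, toHom_app_of]
      simp
    have e := leg_w s ((CostructuredArrow.homMk (ObjectProperty.homMk ((abYoneda A).map f.unop)) w : mkArrow c.unop (toHom X c.unop (X.map f x)) ⟶ mkArrow b.unop (toHom X b.unop x)))
    simp only [CostructuredArrow.homMk_left, ObjectProperty.homMk_hom] at e
    unfold Phi
    erw [e, NatTrans.comp_app, CategoryTheory.comp_apply]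
    erw [abYoneda_map_gen]
    have hg : (FreeAbelianGroup.of f.unop : ((abYoneda A).obj b.unop).obj (op c.unop))
        = ((abYoneda A).obj b.unop).map f (gen b.unop) := by
      erw [map_gen]
      rfl
    rw [hg]
    exact congrArg (fun t => t (gen (unop b)))
      ((s.ι.app (mkArrow b.unop (toHom X b.unop x))).naturality f)

lemma descHom_app (a : A) (x : X.obj (op a)) : (descHom s).app (op a) x = Phi s a x := rfl

lemma fac_single (a : A) (g : (abYoneda A).obj a ⟶ X) :
    g ≫ descHom s = s.ι.app (mkArrow a g) := by
  apply hom_ext_free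
  rw [NatTrans.comp_app, CategoryTheory.comp_apply, descHom_app]
  show Phi s a (g.app (op a) (gen a)) = _
  unfold Phi
  rw [toHom_eval]
  rfl

end AddEnvelopeDenseAux

open AddEnvelopeDenseAux

/-- **Density of the additive envelope.** For any small category `A`, every abelian presheaf
on `A` is the colimit of the canonical diagram of finite direct sums of representable abelian
presheaves mapping to it. -/
theorem addEnvelope_dense (A : Type) [SmallCategory A] (X : Aᵒᵖ ⥤ AddCommGrpCat) :
    Nonempty (IsColimit (canonicalCocone X)) := by
  constructor
  refine { desc := fun s => descHom s, fac := ?_, uniq := ?_ }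
  · intro s j
    show @Eq (j.left.obj ⟶ s.pt) (j.hom ≫ descHom s) (s.ι.app j)
    obtain ⟨n, a, ⟨e⟩⟩ := j.left.property
    refine (cancel_epi e.inv).1 ?_
    apply Sigma.hom_ext
    intro i
    have key : ∀ (h : (abYoneda A).obj (a i) ⟶ j.left.obj),
        (h ≫ j.hom) ≫ descHom s = h ≫ s.ι.app j := by
      intro h
      have w : (addEnvelopeInclusion A).map (X := single (a i)) (Y := j.left) (ObjectProperty.homMk h) ≫ j.hom
          = (mkArrow (a i) (h ≫ j.hom)).hom := rfl
      have e' := leg_w s ((CostructuredArrow.homMk (ObjectProperty.homMk h) w : mkArrow (a i) (h ≫ j.hom) ⟶ j))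
      simp only [CostructuredArrow.homMk_left, ObjectProperty.homMk_hom] at e'
      rw [fac_single s (a i) (h ≫ j.hom), e']
      rfl
    have h2 := key (Sigma.ι (fun i => (abYoneda A).obj (a i)) i ≫ e.inv)
    exact (Category.assoc _ _ _).symm.trans ((Category.assoc _ _ _).symm.trans (h2.trans (Category.assoc _ _ _)))
  · intro s m hm
    apply NatTrans.ext; funext b
    apply AddCommGrpCat.hom_ext
    apply AddMonoidHom.ext
    intro x
    show m.app b x = Phi s b.unop x
    have h := hm (mkArrow b.unop (toHom X b.unop x))
    have e := congrArg (fun t => t.app (op b.unop) (gen b.unop)) h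
    dsimp at e
    have hx : (toHom X b.unop x).app (op b.unop) (gen b.unop) = x := by
      erw [toHom_app_of]
      simp
      rfl
    calc m.app b x = m.app b ((toHom X b.unop x).app (op b.unop) (gen b.unop)) := by rw [hx]
      _ = Phi s b.unop x := by exact e
end
end

section
/- Let A be a small category and i : X → Y a monomorphism of presheaves of sets on A. Then for every object a of A, the induced morphism of free abelian groups ℤ^(X(a)) → ℤ^(Y(a)) is a monomorphism whose cokernel is a free abelian group. Consequently, for any functor L : A → Ch₊(Ab) whose values in each degree are direct sums of representable copresheaves, the induced morphism L_!^ab(ℤ[X]) → L_!^ab(ℤ[Y]) is degreewise a monomorphism with projective cokernel. -/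
open CategoryTheory Limits Opposite

noncomputable section

section Aux

lemma projective_of_retract {C : Type*} [Category C] {P Q : C} [Projective P]
    (a : Q ⟶ P) (b : P ⟶ Q) (h : a ≫ b = 𝟙 Q) : Projective Q where
  factors {E X} f e he := by
    obtain ⟨g, hg⟩ := Projective.factors (b ≫ f) e
    exact ⟨a ≫ g, by rw [Category.assoc, hg, ← Category.assoc, h, Category.id_comp]⟩

lemma cokernel_retract {C : Type*} [Category C] [Preadditive C] {A B : C}
    (s : A ⟶ B) [HasCokernel s] (r : B ⟶ A) (h : s ≫ r = 𝟙 A) :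
    ∃ q : cokernel s ⟶ B, q ≫ cokernel.π s = 𝟙 (cokernel s) := by
  refine ⟨cokernel.desc s (𝟙 B - r ≫ s) (by simp [Preadditive.comp_sub, ← Category.assoc, h]), ?_⟩
  rw [← cancel_epi (cokernel.π s)]
  simp [Preadditive.sub_comp, cokernel.condition]

lemma projective_free (T : Type) : Projective (AddCommGrpCat.free.obj T) where
  factors {E X} f e he := by
    have hs : Function.Surjective e := (AddCommGrpCat.epi_iff_surjective e).1 he
    refine ⟨AddCommGrpCat.ofHom (FreeAbelianGroup.lift (fun t => (hs (f (FreeAbelianGroup.of t))).choose)), ?_⟩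
    refine AddCommGrpCat.hom_ext (FreeAbelianGroup.lift_ext _ _ fun t => ?_)
    show e (FreeAbelianGroup.lift _ (FreeAbelianGroup.of t)) = f (FreeAbelianGroup.of t)
    erw [FreeAbelianGroup.lift_apply_of]
    exact (hs (f (FreeAbelianGroup.of t))).choose_spec

variable {S T : Type} (f : S ⟶ T)

open Classical in
def freeRetr : AddCommGrpCat.free.obj T ⟶ AddCommGrpCat.free.obj S :=
  AddCommGrpCat.ofHom (FreeAbelianGroup.lift (fun t => if h : ∃ s, f s = t then FreeAbelianGroup.of h.choose else 0))

lemma freeRetr_retr (hf : Function.Injective f) :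
    AddCommGrpCat.free.map f ≫ freeRetr f = 𝟙 (AddCommGrpCat.free.obj S) := by
  classical
  refine AddCommGrpCat.hom_ext (FreeAbelianGroup.lift_ext _ _ fun s => ?_)
  have h : ∃ s', f s' = f s := ⟨s, rfl⟩
  show freeRetr f (AddCommGrpCat.free.map f (FreeAbelianGroup.of s)) = FreeAbelianGroup.of s
  have : AddCommGrpCat.free.map f (FreeAbelianGroup.of s) = FreeAbelianGroup.of (f s) :=
    FreeAbelianGroup.map_of_apply s
  rw [this, freeRetr]
  erw [FreeAbelianGroup.lift_apply_of]
  rw [dif_pos h]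
  congr 1
  exact hf h.choose_spec


variable (hf : Function.Injective f)

open Classical in
def cokerToFree : cokernel (AddCommGrpCat.free.map f) ⟶
    AddCommGrpCat.free.obj {t : T // ¬∃ s, f s = t} :=
  cokernel.desc _
    (AddCommGrpCat.ofHom (FreeAbelianGroup.lift fun t =>
      if h : ∃ s, f s = t then 0 else FreeAbelianGroup.of ⟨t, h⟩)) (by
    classical
    refine AddCommGrpCat.hom_ext (FreeAbelianGroup.lift_ext _ _ fun s => ?_)
    show FreeAbelianGroup.lift _ (AddCommGrpCat.free.map f (FreeAbelianGroup.of s)) = 0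
    rw [show AddCommGrpCat.free.map f (FreeAbelianGroup.of s) = FreeAbelianGroup.of (f s) from
      FreeAbelianGroup.map_of_apply s]
    erw [FreeAbelianGroup.lift_apply_of]
    rw [dif_pos ⟨s, rfl⟩]; rfl)

def freeToCoker : AddCommGrpCat.free.obj {t : T // ¬∃ s, f s = t} ⟶
    cokernel (AddCommGrpCat.free.map f) :=
  AddCommGrpCat.ofHom (FreeAbelianGroup.lift fun c => cokernel.π (AddCommGrpCat.free.map f) (FreeAbelianGroup.of c.1))

lemma freeToCoker_cokerToFree :
    freeToCoker f ≫ cokerToFree f = 𝟙 _ := by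
  classical
  refine AddCommGrpCat.hom_ext (FreeAbelianGroup.lift_ext _ _ fun c => ?_)
  show cokerToFree f (freeToCoker f (FreeAbelianGroup.of c)) = FreeAbelianGroup.of c
  rw [freeToCoker]
  erw [FreeAbelianGroup.lift_apply_of]
  show (cokernel.π (AddCommGrpCat.free.map f) ≫ cokerToFree f) (FreeAbelianGroup.of c.1) = _
  erw [cokerToFree, cokernel.π_desc]
  erw [FreeAbelianGroup.lift_apply_of]
  rw [dif_neg c.2]

lemma cokerToFree_freeToCoker :
    cokerToFree f ≫ freeToCoker f = 𝟙 _ := by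
  classical
  erw [← cancel_epi (cokernel.π (AddCommGrpCat.free.map f)), Category.comp_id, ← Category.assoc,
    cokerToFree, cokernel.π_desc]
  refine AddCommGrpCat.hom_ext (FreeAbelianGroup.lift_ext _ _ fun t => ?_)
  show freeToCoker f (FreeAbelianGroup.lift _ (FreeAbelianGroup.of t)) =
    cokernel.π (AddCommGrpCat.free.map f) (FreeAbelianGroup.of t)
  erw [FreeAbelianGroup.lift_apply_of]
  by_cases h : ∃ s, f s = t
  · rw [dif_pos h]
    erw [map_zero]
    obtain ⟨s, rfl⟩ := h
    rw [show FreeAbelianGroup.of (f s) = AddCommGrpCat.free.map f (FreeAbelianGroup.of s) from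
      (FreeAbelianGroup.map_of_apply s).symm]
    have h0 : (AddCommGrpCat.free.map f ≫ cokernel.π (AddCommGrpCat.free.map f))
        (FreeAbelianGroup.of s) = 0 := by
      rw [cokernel.condition]; rfl
    exact h0.symm
  · rw [dif_neg h, freeToCoker]
    erw [FreeAbelianGroup.lift_apply_of]

def cokerIso : cokernel (AddCommGrpCat.free.map f) ≅
    AddCommGrpCat.free.obj {t : T // ¬∃ s, f s = t} :=
  ⟨cokerToFree f, freeToCoker f, cokerToFree_freeToCoker f, freeToCoker_cokerToFree f⟩

lemma free_freeAbelianGroup (α : Type) : Module.Free ℤ (FreeAbelianGroup α) :=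
  Module.Free.of_equiv (FreeAbelianGroup.equivFinsupp α).toIntLinearEquiv.symm

lemma cokerFree : Module.Free ℤ ↥(cokernel (AddCommGrpCat.free.map f)) := by
  have e : ↥(cokernel (AddCommGrpCat.free.map f)) ≃+
      FreeAbelianGroup {t : T // ¬∃ s, f s = t} :=
    (cokerIso f).addCommGroupIsoToAddEquiv
  have := free_freeAbelianGroup {t : T // ¬∃ s, f s = t}
  exact Module.Free.of_equiv e.toIntLinearEquiv.symm

end Aux

/-- **Free abelian presheaves on monomorphisms.** Let `A` be a small category and
`i : X ⟶ Y` a monomorphism of presheaves of sets on `A`. Then: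
(1) for every object `a` of `A`, the induced morphism of free abelian groups
`ℤ^(X(a)) ⟶ ℤ^(Y(a))` is a monomorphism whose cokernel is a free abelian group;
(2) consequently, for every family of objects of `A` (such as the family of representables
occurring in a given degree of a functor `L : A ⥤ Ch₊(Ab)` whose values in each degree are
direct sums of representable copresheaves), the induced morphism
`⊕ᵢ ℤ^(X(aᵢ)) ⟶ ⊕ᵢ ℤ^(Y(aᵢ))` (i.e. the morphism `L_!^ab(ℤ[X]) ⟶ L_!^ab(ℤ[Y])` in that
degree) is a monomorphism with projective cokernel. -/
theorem free_map_of_mono {A : Type} [SmallCategory A] {X Y : Aᵒᵖ ⥤ Type}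
    (i : X ⟶ Y) [Mono i] :
    (∀ a : A, Mono (AddCommGrpCat.free.map (i.app (op a))) ∧
      Module.Free ℤ ↥(cokernel (AddCommGrpCat.free.map (i.app (op a))))) ∧
    (∀ (I : Type) (a : I → A),
      Mono (Limits.Sigma.map (f := fun j => AddCommGrpCat.free.obj (X.obj (op (a j))))
        (g := fun j => AddCommGrpCat.free.obj (Y.obj (op (a j))))
        fun j => AddCommGrpCat.free.map (i.app (op (a j)))) ∧
      Projective (cokernel (Limits.Sigma.map (f := fun j => AddCommGrpCat.free.obj (X.obj (op (a j))))
        (g := fun j => AddCommGrpCat.free.obj (Y.obj (op (a j))))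
        fun j => AddCommGrpCat.free.map (i.app (op (a j)))))) := by
  have happ : ∀ a : Aᵒᵖ, Mono (i.app a) := (NatTrans.mono_iff_mono_app i).1 inferInstance
  have hinj : ∀ a : Aᵒᵖ, Function.Injective (i.app a) := by
    intro a
    rw [← CategoryTheory.mono_iff_injective]
    exact happ a
  constructor
  · intro a
    haveI : IsSplitMono (AddCommGrpCat.free.map (i.app (op a))) :=
      IsSplitMono.mk' ⟨freeRetr (i.app (op a)), freeRetr_retr _ (hinj (op a))⟩
    exact ⟨inferInstance, cokerFree _⟩
  · intro I a
    let p : ∀ j : I, AddCommGrpCat.free.obj (X.obj (op (a j))) ⟶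
        AddCommGrpCat.free.obj (Y.obj (op (a j))) :=
      fun j => AddCommGrpCat.free.map (i.app (op (a j)))
    let r : ∀ j : I, AddCommGrpCat.free.obj (Y.obj (op (a j))) ⟶
        AddCommGrpCat.free.obj (X.obj (op (a j))) :=
      fun j => freeRetr (i.app (op (a j)))
    have hid : ∀ j, p j ≫ r j = 𝟙 (AddCommGrpCat.free.obj (X.obj (op (a j)))) :=
      fun j => freeRetr_retr _ (hinj (op (a j)))
    have hpr : Limits.Sigma.map p ≫ Limits.Sigma.map r =
        𝟙 (∐ fun j => AddCommGrpCat.free.obj (X.obj (op (a j)))) := by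
      rw [Limits.Sigma.map_comp_map, funext hid, Limits.Sigma.map_id]
    haveI : IsSplitMono (Limits.Sigma.map p) := IsSplitMono.mk' ⟨Limits.Sigma.map r, hpr⟩
    obtain ⟨q, hq⟩ := cokernel_retract (Limits.Sigma.map p) (Limits.Sigma.map r) hpr
    haveI : ∀ j, Projective (AddCommGrpCat.free.obj (Y.obj (op (a j)))) :=
      fun j => projective_free _
    exact ⟨inferInstance, projective_of_retract q (cokernel.π _) hq⟩
end
end
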